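/- arXiv:1201.2243 — 2 statements merged into one kernel-verified Lean document; each statement's English description precedes it below -/
import Mathlib

section
/- Let p > 1 and let φ : ℝ → ℝ be a twice continuously differentiable, strictly decreasing function with 0 < φ < 1, satisfying φ''(ζ) + (e^{2ζ}/2 − (p+3)/(p−1)) φ'(ζ) + (2(p+1)/(p−1)²) φ(ζ)(1 − φ(ζ)^{p−1}) = 0 on ℝ, with φ(ζ) → 1 as ζ → −∞ and φ(ζ) → 0 as ζ → +∞. Then there exists ε ∈ (0,1) such that 1 − φ(z) + ε φ'(z) ≥ 0 for all z ∈ ℝ. -/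
set_option maxHeartbeats 1000000

open Real Set Filter

/-- for the self-similar profile `φ` (a strictly decreasing `C²` solution of the
profile ODE with values in `(0,1)` and limits 1 at `−∞`, 0 at `+∞`), there exists
`ε ∈ (0,1)` such that `1 − φ(z) + ε φ'(z) ≥ 0` for all `z`. -/
theorem stmt_16 (p : ℝ) (hp : 1 < p)
    (φ : ℝ → ℝ) (hφreg : ContDiff ℝ 2 φ) (hdec : StrictAnti φ)
    (hrange : ∀ ζ : ℝ, 0 < φ ζ ∧ φ ζ < 1)
    (hode : ∀ ζ : ℝ, deriv (deriv φ) ζ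
        + (Real.exp (2 * ζ) / 2 - (p + 3) / (p - 1)) * deriv φ ζ
        + (2 * (p + 1) / (p - 1) ^ 2) * φ ζ * (1 - (φ ζ) ^ (p - 1)) = 0)
    (hlim₁ : Tendsto φ atBot (nhds 1)) (hlim₀ : Tendsto φ atTop (nhds 0)) :
    ∃ ε : ℝ, ε ∈ Ioo (0 : ℝ) 1 ∧ ∀ z : ℝ, 0 ≤ 1 - φ z + ε * deriv φ z := by
  have hp1 : (0:ℝ) < p - 1 := by linarith
  -- constants
  set c : ℝ := (p + 3) / (p - 1) with hc_def
  set k : ℝ := 2 * (p + 1) / (p - 1) ^ 2 with hk_def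
  have hc : 0 < c := by positivity
  have hk : 0 < k := by positivity
  set C : ℝ := max 1 (p - 1) with hC_def
  have hC1 : (1:ℝ) ≤ C := le_max_left _ _
  have hC0 : (0:ℝ) < C := lt_of_lt_of_le one_pos hC1
  set K : ℝ := k * C with hK_def
  have hK : 0 < K := mul_pos hk hC0
  set ε : ℝ := min (1/2) (min ((2*c)⁻¹) ((1 + 2*K)⁻¹)) with hε_def
  have hε0 : 0 < ε := by
    apply lt_min (by norm_num)
    exact lt_min (by positivity) (by positivity)
  have hε_half : ε ≤ 1/2 := min_le_left _ _
  have hε1 : ε < 1 := lt_of_le_of_lt hε_half (by norm_num)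
  have hεc : ε * c ≤ 1/2 := by
    have h1 : ε ≤ (2*c)⁻¹ := le_trans (min_le_right _ _) (min_le_left _ _)
    calc ε * c ≤ (2*c)⁻¹ * c := mul_le_mul_of_nonneg_right h1 hc.le
      _ = 1/2 := by field_simp
  have hεK : ε * K < 1 / (2 * ε) := by
    have h1 : ε ≤ (1 + 2*K)⁻¹ := le_trans (min_le_right _ _) (min_le_right _ _)
    have h2 : ε * (1 + 2*K) ≤ 1 := by
      calc ε * (1 + 2*K) ≤ (1 + 2*K)⁻¹ * (1 + 2*K) :=
            mul_le_mul_of_nonneg_right h1 (by positivity)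
        _ = 1 := inv_mul_cancel₀ (by positivity)
    rw [lt_div_iff₀ (by positivity)]
    nlinarith [hε0, hK]
  -- regularity
  have hφdiff : Differentiable ℝ φ := hφreg.differentiable (by norm_num)
  have h2' : ContDiff ℝ (1 + 1) φ := by
    have h : ((2:ℕ) : WithTop ℕ∞) = 1 + 1 := by norm_num
    exact h ▸ hφreg
  have hDcd : ContDiff ℝ 1 (deriv φ) := (contDiff_succ_iff_deriv.mp h2').2.2
  have hDdiff : Differentiable ℝ (deriv φ) := hDcd.differentiable (by norm_num)
  -- the key function J
  set J : ℝ → ℝ := fun z => 1 - φ z + ε * deriv φ z with hJ_def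
  have hJhas : ∀ z, HasDerivAt J (-(deriv φ z) + ε * deriv (deriv φ) z) z := by
    intro z
    have h1 : HasDerivAt φ (deriv φ z) z := (hφdiff z).hasDerivAt
    have h2 : HasDerivAt (deriv φ) (deriv (deriv φ) z) z := (hDdiff z).hasDerivAt
    have h := ((hasDerivAt_const z (1:ℝ)).sub h1).add (h2.const_mul ε)
    simp only [zero_sub] at h
    exact h
  have hJcont : Continuous J :=
    (continuous_const.sub hφdiff.continuous).add
      (continuous_const.mul hDcd.continuous)
  -- Bernoulli-type bound: 1 - x^(p-1) ≤ C (1 - x) for 0 < x < 1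
  have hbern : ∀ x : ℝ, 0 < x → x < 1 → 1 - x ^ (p - 1) ≤ C * (1 - x) := by
    intro x hx0 hx1
    rcases le_or_gt (p - 1) 1 with h | h
    · have hxx : x ^ (1:ℝ) ≤ x ^ (p - 1) :=
        Real.rpow_le_rpow_of_exponent_ge hx0 hx1.le h
      rw [Real.rpow_one] at hxx
      nlinarith [hC1]
    · have hb : 1 + (p - 1) * (x - 1) ≤ (1 + (x - 1)) ^ (p - 1) :=
        one_add_mul_self_le_rpow_one_add (by linarith) h.le
      have hx : (1 + (x - 1)) = x := by ring
      rw [hx] at hb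
      have hCge : p - 1 ≤ C := le_max_right _ _
      nlinarith [hb, hx1]
  -- wherever J < 0, its derivative is positive
  have hkey : ∀ z, J z < 0 → 0 < -(deriv φ z) + ε * deriv (deriv φ) z := by
    intro z hJz
    obtain ⟨hF0, hF1⟩ := hrange z
    set F := φ z with hF_def
    set D := deriv φ z with hD_def
    have h1F : 0 < 1 - F := by linarith
    have hode' : deriv (deriv φ) z
        = -(Real.exp (2*z)/2 - c) * D - k * F * (1 - F ^ (p - 1)) := by
      have := hode z
      linarith
    have hD_neg : (1 - F) / ε < -D := by
      have hJz' : 1 - F + ε * D < 0 := hJz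
      rw [div_lt_iff₀ hε0]
      nlinarith
    have ha : 1/2 ≤ 1 + ε * (Real.exp (2*z)/2 - c) := by
      have he : 0 < Real.exp (2*z) := Real.exp_pos _
      nlinarith [hε0]
    have hpow0 : 0 ≤ 1 - F ^ (p - 1) := by
      have : F ^ (p - 1) ≤ 1 := Real.rpow_le_one hF0.le hF1.le hp1.le
      linarith
    have hpowC : 1 - F ^ (p - 1) ≤ C * (1 - F) := hbern F hF0 hF1
    rw [hode']
    have hexpand : -D + ε * (-(Real.exp (2*z)/2 - c) * D - k * F * (1 - F ^ (p-1)))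
        = (1 + ε * (Real.exp (2*z)/2 - c)) * (-D) - ε * (k * F * (1 - F ^ (p-1))) := by
      ring
    rw [hexpand]
    have h1 : 1/(2*ε)*(1-F) ≤ (1 + ε * (Real.exp (2*z)/2 - c)) * (-D) := by
      have hm := mul_le_mul ha hD_neg.le (le_of_lt (div_pos h1F hε0)) (by linarith)
      calc 1/(2*ε)*(1-F) = (1/2)*((1-F)/ε) := by ring
        _ ≤ _ := hm
    have h2 : ε * (k * F * (1 - F ^ (p-1))) ≤ ε * K * (1 - F) := by
      have hFle : F * (1 - F ^ (p-1)) ≤ 1 * (C * (1 - F)) :=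
        mul_le_mul hF1.le hpowC hpow0 (by norm_num)
      rw [one_mul] at hFle
      calc ε * (k * F * (1 - F ^ (p-1))) = ε * k * (F * (1 - F ^ (p-1))) := by ring
        _ ≤ ε * k * (C * (1 - F)) :=
            mul_le_mul_of_nonneg_left hFle (by positivity)
        _ = ε * K * (1 - F) := by rw [hK_def]; ring
    have h3 : ε * K * (1 - F) < 1 / (2*ε) * (1 - F) :=
      mul_lt_mul_of_pos_right hεK h1F
    linarith
  -- main claim
  refine ⟨ε, ⟨hε0, hε1⟩, ?_⟩
  intro z₁
  by_contra hneg
  push_neg at hneg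
  have hJz1 : J z₁ < 0 := hneg
  -- J < 0 on the whole ray (-∞, z₁]
  have hray : ∀ z ≤ z₁, J z < 0 := by
    intro z hz
    rcases eq_or_lt_of_le hz with rfl | hzlt
    · exact hJz1
    by_contra hge
    push_neg at hge
    have hS_ne : (Icc z z₁ ∩ {t | 0 ≤ J t}).Nonempty := ⟨z, ⟨le_refl z, hzlt.le⟩, hge⟩
    have hS_cpt : IsCompact (Icc z z₁ ∩ {t | 0 ≤ J t}) :=
      isCompact_Icc.inter_right (isClosed_le continuous_const hJcont)
    obtain ⟨s, hs_mem, hs_ub⟩ := hS_cpt.exists_isGreatest hS_ne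
    have hsJ : 0 ≤ J s := hs_mem.2
    have hs_le : s ≤ z₁ := hs_mem.1.2
    have hs_lt : s < z₁ := lt_of_le_of_ne hs_le (by rintro rfl; linarith)
    have hs_ge : z ≤ s := hs_mem.1.1
    have hneg_on : ∀ t ∈ Ioc s z₁, J t < 0 := by
      intro t ht
      by_contra hget
      push_neg at hget
      have htS : t ∈ Icc z z₁ ∩ {t | 0 ≤ J t} := ⟨⟨le_trans hs_ge ht.1.le, ht.2⟩, hget⟩
      exact absurd (hs_ub htS) (not_le.mpr ht.1)
    have hmono : StrictMonoOn J (Icc s z₁) := by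
      apply strictMonoOn_of_deriv_pos (convex_Icc s z₁) hJcont.continuousOn
      intro t ht
      rw [interior_Icc] at ht
      rw [(hJhas t).deriv]
      exact hkey t (hneg_on t ⟨ht.1, ht.2.le⟩)
    have : J s < J z₁ := hmono ⟨le_refl s, hs_le⟩ ⟨hs_le, le_refl z₁⟩ hs_lt
    linarith
  -- hence J is increasing on the ray, so J z < J z₁ for z < z₁
  have hmono2 : ∀ z < z₁, J z < J z₁ := by
    intro z hz
    have hmono : StrictMonoOn J (Icc z z₁) := by
      apply strictMonoOn_of_deriv_pos (convex_Icc z z₁) hJcont.continuousOn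
      intro t ht
      rw [interior_Icc] at ht
      rw [(hJhas t).deriv]
      exact hkey t (hray t ht.2.le)
    exact hmono ⟨le_refl z, hz.le⟩ ⟨hz.le, le_refl z₁⟩ hz
  -- derivative bound on the ray
  have hv0 : 0 < -J z₁ := by linarith
  have hDbound : ∀ z < z₁, deriv φ z < -(-J z₁) / ε := by
    intro z hz
    have h1 : J z < J z₁ := hmono2 z hz
    have h2 : 0 < 1 - φ z := by linarith [(hrange z).2]
    have h3 : ε * deriv φ z < J z₁ := by
      have hJzeq : J z = 1 - φ z + ε * deriv φ z := rfl
      linarith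
    rw [lt_div_iff₀ hε0, mul_comm]
    linarith
  -- mean value contradiction
  have hz0_lt : z₁ - 2 * ε / (-J z₁) < z₁ := by
    have : 0 < 2 * ε / (-J z₁) := div_pos (by positivity) hv0
    linarith
  obtain ⟨ξ, hξ, hslope⟩ := exists_hasDerivAt_eq_slope φ (deriv φ) hz0_lt
    hφdiff.continuous.continuousOn (fun x _ => (hφdiff x).hasDerivAt)
  have hξlt : ξ < z₁ := hξ.2
  have hDξ : deriv φ ξ < -(-J z₁) / ε := hDbound ξ hξlt
  have hlen : z₁ - (z₁ - 2 * ε / (-J z₁)) = 2 * ε / (-J z₁) := by ring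
  have hlenpos : 0 < z₁ - (z₁ - 2 * ε / (-J z₁)) := by
    rw [hlen]; exact div_pos (by positivity) hv0
  have hslope' : φ z₁ - φ (z₁ - 2 * ε / (-J z₁))
      = deriv φ ξ * (z₁ - (z₁ - 2 * ε / (-J z₁))) := by
    rw [hslope]
    exact (div_mul_cancel₀ _ (ne_of_gt hlenpos)).symm
  have hbig : φ z₁ - φ (z₁ - 2 * ε / (-J z₁)) < -2 := by
    rw [hslope', hlen]
    have h1 : deriv φ ξ * (2 * ε / (-J z₁)) < (-(-J z₁) / ε) * (2 * ε / (-J z₁)) :=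
      mul_lt_mul_of_pos_right hDξ (div_pos (by positivity) hv0)
    have h2 : (-(-J z₁) / ε) * (2 * ε / (-J z₁)) = -2 := by
      have hJne : J z₁ ≠ 0 := by intro h; rw [h] at hv0; norm_num at hv0
      have hεne : ε ≠ 0 := ne_of_gt hε0
      field_simp
    linarith
  have h01 : 0 < φ z₁ := (hrange z₁).1
  have h02 : φ (z₁ - 2 * ε / (-J z₁)) < 1 := (hrange _).2
  linarith
end

section
/- Let p > 1 and let φ : ℝ → ℝ be a twice continuously differentiable, strictly decreasing function with 0 < φ < 1, satisfying φ''(ζ) + (e^{2ζ}/2 − (p+3)/(p−1)) φ'(ζ) + (2(p+1)/(p−1)²) φ(ζ)(1 − φ(ζ)^{p−1}) = 0 on ℝ, and such that (1 − φ(ζ)) · exp(−2(p+1)ζ/(p−1)) converges to a finite positive limit as ζ → −∞. Then e^{−ζ} φ'(ζ) → 0 as ζ → −∞. -/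
open Real Set Filter

lemma antitone_deriv_nonpos' {f : ℝ → ℝ} (hf : Differentiable ℝ f) (ha : Antitone f) (x : ℝ) :
    deriv f x ≤ 0 := by
  have h := (hf x).hasDerivAt
  rw [hasDerivAt_iff_tendsto_slope] at h
  have h' : Tendsto (slope f x) (nhdsWithin x (Ioi x)) (nhds (deriv f x)) :=
    h.mono_left (nhdsWithin_mono x fun y hy => ne_of_gt hy)
  refine le_of_tendsto h' ?_
  filter_upwards [self_mem_nhdsWithin] with y (hy : x < y)
  rw [slope_def_field]
  have : f y ≤ f x := ha hy.le
  have hxy : 0 < y - x := by linarith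
  exact div_nonpos_of_nonpos_of_nonneg (by linarith) hxy.le

/-- if the self-similar profile `φ` satisfies
`(1 − φ(ζ)) exp(−2(p+1)ζ/(p−1)) → L ∈ (0,∞)` as `ζ → −∞`, then
`e^{−ζ} φ'(ζ) → 0` as `ζ → −∞`. -/
theorem stmt_17 (p : ℝ) (hp : 1 < p)
    (φ : ℝ → ℝ) (hφreg : ContDiff ℝ 2 φ) (hdec : StrictAnti φ)
    (hrange : ∀ ζ : ℝ, 0 < φ ζ ∧ φ ζ < 1)
    (hode : ∀ ζ : ℝ, deriv (deriv φ) ζ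
        + (Real.exp (2 * ζ) / 2 - (p + 3) / (p - 1)) * deriv φ ζ
        + (2 * (p + 1) / (p - 1) ^ 2) * φ ζ * (1 - (φ ζ) ^ (p - 1)) = 0)
    (L : ℝ) (hL : 0 < L)
    (hasymp : Tendsto (fun ζ => (1 - φ ζ) * Real.exp (-2 * (p + 1) * ζ / (p - 1)))
      atBot (nhds L)) :
    Tendsto (fun ζ => Real.exp (-ζ) * deriv φ ζ) atBot (nhds 0) := by
  have hp1 : (0:ℝ) < p - 1 := by linarith
  have hdiff : Differentiable ℝ φ := hφreg.differentiable (by norm_num)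
  have hdiff' : Differentiable ℝ (deriv φ) := by
    have h2 : ContDiff ℝ ((1 : WithTop ℕ∞) + 1) φ := by
      norm_num
      exact hφreg
    exact ((contDiff_succ_iff_deriv.1 h2).2.2).differentiable one_ne_zero
  have hd0 : ∀ ζ : ℝ, deriv φ ζ ≤ 0 := antitone_deriv_nonpos' hdiff hdec.antitone
  -- second derivative nonpositive on Iic 0
  have hβ1 : (1:ℝ) < (p + 3) / (p - 1) := by
    rw [lt_div_iff₀ hp1]; linarith
  have hd2 : ∀ ζ ∈ Iic (0:ℝ), deriv (deriv φ) ζ ≤ 0 := by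
    intro ζ hζ
    have h := hode ζ
    have hcoef : Real.exp (2 * ζ) / 2 - (p + 3) / (p - 1) < 0 := by
      have : Real.exp (2 * ζ) ≤ 1 := exp_le_one_iff.2 (by simp at hζ; linarith)
      linarith
    have hφpos := (hrange ζ).1
    have hrpow : (φ ζ) ^ (p - 1) < 1 :=
      Real.rpow_lt_one hφpos.le (hrange ζ).2 hp1
    have hterm : 0 ≤ (2 * (p + 1) / (p - 1) ^ 2) * φ ζ * (1 - (φ ζ) ^ (p - 1)) := by
      apply mul_nonneg (mul_nonneg (by positivity) hφpos.le)
      linarith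
    nlinarith [hd0 ζ, mul_nonneg (neg_nonneg.2 hcoef.le) (neg_nonneg.2 (hd0 ζ))]
  have hanti : AntitoneOn (deriv φ) (Iic (0:ℝ)) := by
    apply antitoneOn_of_deriv_nonpos (convex_Iic 0) hdiff'.continuous.continuousOn
      (hdiff'.differentiableOn)
    intro x hx
    exact hd2 x (interior_subset hx)
  -- key pointwise bound for ζ ≤ -1
  have hkey : ∀ ζ : ℝ, ζ ≤ -1 → φ (ζ + 1) - φ ζ ≤ deriv φ ζ := by
    intro ζ hζ
    obtain ⟨c, hc, hcd⟩ := exists_deriv_eq_slope φ (by linarith : ζ < ζ + 1)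
      (hdiff.continuous.continuousOn) (hdiff.differentiableOn)
    have hcval : deriv φ c = φ (ζ + 1) - φ ζ := by
      rw [hcd]; field_simp; ring
    have hle : deriv φ c ≤ deriv φ ζ :=
      hanti (show ζ ∈ Iic (0:ℝ) by simp; linarith)
        (show c ∈ Iic (0:ℝ) by simp; linarith [hc.2]) hc.1.le
    linarith [hcval ▸ hle]
  -- limit of exp(-ζ)(1-φ ζ)
  have hβpos : (0:ℝ) < (p + 3) / (p - 1) := by positivity
  have hexp : Tendsto (fun ζ : ℝ => Real.exp ((p + 3) / (p - 1) * ζ)) atBot (nhds 0) :=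
    Real.tendsto_exp_atBot.comp ((tendsto_const_mul_atBot_of_pos hβpos).2 tendsto_id)
  have hh : Tendsto (fun ζ => Real.exp (-ζ) * (1 - φ ζ)) atBot (nhds 0) := by
    have := hasymp.mul hexp
    rw [mul_zero] at this
    refine this.congr fun ζ => ?_
    rw [mul_assoc, ← Real.exp_add]
    have harg : -2 * (p + 1) * ζ / (p - 1) + (p + 3) / (p - 1) * ζ = -ζ := by
      field_simp; ring
    rw [harg]; ring
  have hshift : Tendsto (fun ζ => Real.exp (-(ζ + 1)) * (1 - φ (ζ + 1))) atBot (nhds 0) :=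
    hh.comp (tendsto_atBot_add_const_right _ 1 tendsto_id)
  have hlow : Tendsto (fun ζ => -(Real.exp 1 * (Real.exp (-(ζ + 1)) * (1 - φ (ζ + 1)))))
      atBot (nhds 0) := by
    have := (hshift.const_mul (Real.exp 1)).neg
    simpa using this
  refine tendsto_of_tendsto_of_tendsto_of_le_of_le' hlow tendsto_const_nhds ?_ ?_
  · filter_upwards [eventually_le_atBot (-1 : ℝ)] with ζ hζ
    have h1 : φ (ζ + 1) - 1 ≤ deriv φ ζ := by
      have := hkey ζ hζ
      linarith [(hrange ζ).2]
    have hE : Real.exp 1 * Real.exp (-(ζ + 1)) = Real.exp (-ζ) := by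
      rw [← Real.exp_add]; congr 1; ring
    have h2 : Real.exp (-ζ) * (φ (ζ + 1) - 1) ≤ Real.exp (-ζ) * deriv φ ζ :=
      mul_le_mul_of_nonneg_left h1 (Real.exp_nonneg _)
    calc -(Real.exp 1 * (Real.exp (-(ζ + 1)) * (1 - φ (ζ + 1))))
        = Real.exp (-ζ) * (φ (ζ + 1) - 1) := by rw [← mul_assoc, hE]; ring
      _ ≤ Real.exp (-ζ) * deriv φ ζ := h2
  · filter_upwards with ζ
    exact mul_nonpos_iff.2 (Or.inl ⟨Real.exp_nonneg _, hd0 ζ⟩)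
end
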